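/- Fix 𝔠 > 0. Define K_α(z) := ∫₀^∞ e^{−z cosh t} cosh(αt) dt for z > 0, a₁(z) := K₃(z)/K₂(z), a₂(z) := −a₁(z)² + 6a₁(z)/z + 1, a₃(z) := −a₁(z)³ + 6a₁(z)²/z − 6a₁(z)/z² + a₁(z) − 1/z, and set c_∞(z) := √( (𝔠²/z)·(z·a₂(z) − a₁(z))/(z·a₃(z)) ) and ĉ(z) := c_∞(z)·𝔠/√(𝔠² + c_∞(z)²). Then lim_{z→0⁺} ĉ(z)/𝔠 = 1/√3; equivalently, lim_{z→0⁺} (z·a₂(z) − a₁(z)) / (z²·a₃(z)) = 1/2. -/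

import Mathlib

open MeasureTheory Filter

/-- The modified Bessel function K_α(z) = ∫₀^∞ e^{−z cosh t} cosh(αt) dt. -/
noncomputable def Kb (α z : ℝ) : ℝ :=
  ∫ t in Set.Ioi (0 : ℝ), Real.exp (-z * Real.cosh t) * Real.cosh (α * t)

noncomputable def aOne (z : ℝ) : ℝ := Kb 3 z / Kb 2 z

noncomputable def aTwo (z : ℝ) : ℝ := -aOne z ^ 2 + 6 * aOne z / z + 1

noncomputable def aThree (z : ℝ) : ℝ :=
  -aOne z ^ 3 + 6 * aOne z ^ 2 / z - 6 * aOne z / z ^ 2 + aOne z - 1 / z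

/-- The sound speed c_∞(z) = √((c²/z)(za₂ − a₁)/(za₃)). -/
noncomputable def cInf (c z : ℝ) : ℝ :=
  Real.sqrt ((c ^ 2 / z) * (z * aTwo z - aOne z) / (z * aThree z))

/-- The relativistic sound speed ĉ(z) = c_∞(z)·c/√(c² + c_∞(z)²). -/
noncomputable def cHat (c z : ℝ) : ℝ := cInf c z * c / Real.sqrt (c ^ 2 + cInf c z ^ 2)

section Aux

open Real Set

/-- Quadratic lower bound for cosh. -/
lemma cosh_quad_lower (t : ℝ) (ht : 0 ≤ t) : 1 + t ^ 2 / 2 ≤ Real.cosh t := by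
  have h1 : t / 2 ≤ Real.sinh (t / 2) := Real.self_le_sinh_iff.mpr (by linarith)
  have h2 : Real.cosh t = Real.cosh (t / 2) ^ 2 + Real.sinh (t / 2) ^ 2 := by
    have := Real.cosh_two_mul (t / 2)
    rwa [show 2 * (t / 2) = t by ring] at this
  nlinarith [Real.cosh_sq (t / 2), sq_nonneg (Real.sinh (t / 2) - t / 2)]

/-- Exponential domination of the Bessel integrand. -/
lemma kb_integrand_le {z α t : ℝ} (hz : 0 < z) (hα : 0 ≤ α) (ht : 0 ≤ t) :
    Real.exp (-z * Real.cosh t) * Real.cosh (α * t)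
      ≤ Real.exp ((α + 1) ^ 2 / z) * Real.exp (-(1 : ℝ) * t) := by
  have hcosh_le : Real.cosh (α * t) ≤ Real.exp (α * t) := by
    rw [Real.cosh_eq]
    have h := Real.exp_le_exp.mpr (neg_le_self (mul_nonneg hα ht))
    linarith [Real.exp_pos (α * t)]
  have hq : (α + 1) * t - z * (t ^ 2 / 2) ≤ (α + 1) ^ 2 / z := by
    rw [sub_le_iff_le_add, ← sub_le_iff_le_add']
    rw [show (α+1)*t - (α+1)^2/z = ((α+1)*t*z - (α+1)^2)/z by field_simp]
    rw [div_le_iff₀ hz]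
    nlinarith [sq_nonneg (z * t - (α + 1))]
  have hc := cosh_quad_lower t ht
  have hkey : α * t - z * Real.cosh t ≤ (α + 1) ^ 2 / z - 1 * t := by
    have h3 : z * (1 + t ^ 2 / 2) ≤ z * Real.cosh t :=
      mul_le_mul_of_nonneg_left hc hz.le
    nlinarith
  calc Real.exp (-z * Real.cosh t) * Real.cosh (α * t)
      ≤ Real.exp (-z * Real.cosh t) * Real.exp (α * t) :=
        mul_le_mul_of_nonneg_left hcosh_le (Real.exp_pos _).le
    _ = Real.exp (α * t - z * Real.cosh t) := by rw [← Real.exp_add]; ring_nf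
    _ ≤ Real.exp ((α + 1) ^ 2 / z - 1 * t) := Real.exp_le_exp.mpr hkey
    _ = Real.exp ((α + 1) ^ 2 / z) * Real.exp (-(1 : ℝ) * t) := by
        rw [← Real.exp_add]; ring_nf

lemma kb_integrableOn {z : ℝ} (hz : 0 < z) {α : ℝ} (hα : 0 ≤ α) :
    IntegrableOn (fun t => Real.exp (-z * Real.cosh t) * Real.cosh (α * t)) (Ioi 0) := by
  have hg : IntegrableOn (fun t : ℝ =>
      Real.exp ((α + 1) ^ 2 / z) * Real.exp (-(1 : ℝ) * t)) (Ioi 0) :=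
    (exp_neg_integrableOn_Ioi 0 one_pos).const_mul _
  refine hg.mono' ?_ ?_
  · exact (Continuous.mul (by continuity) (by continuity)).aestronglyMeasurable
  · filter_upwards [ae_restrict_mem measurableSet_Ioi] with t ht
    rw [Real.norm_eq_abs, abs_of_nonneg (mul_nonneg (Real.exp_pos _).le (Real.cosh_pos _).le)]
    exact kb_integrand_le hz hα (le_of_lt ht)

lemma kb_pos {z : ℝ} (hz : 0 < z) {α : ℝ} (hα : 0 ≤ α) : 0 < Kb α z := by
  unfold Kb
  rw [MeasureTheory.setIntegral_pos_iff_support_of_nonneg_ae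
    (Filter.Eventually.of_forall fun t =>
      mul_nonneg (Real.exp_pos _).le (Real.cosh_pos _).le) (kb_integrableOn hz hα)]
  have hsupp : (Function.support fun t =>
      Real.exp (-z * Real.cosh t) * Real.cosh (α * t)) = Set.univ := by
    ext t
    simp only [Function.mem_support, Set.mem_univ, iff_true]
    exact ne_of_gt (mul_pos (Real.exp_pos _) (Real.cosh_pos _))
  rw [hsupp, Set.univ_inter, Real.volume_Ioi]
  exact ENNReal.zero_lt_top

lemma kb_one_le_two {z : ℝ} (hz : 0 < z) : Kb 1 z ≤ Kb 2 z := by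
  refine MeasureTheory.setIntegral_mono_on (kb_integrableOn hz zero_le_one)
    (kb_integrableOn hz (by norm_num)) measurableSet_Ioi fun t ht => ?_
  have ht0 : 0 ≤ t := le_of_lt ht
  refine mul_le_mul_of_nonneg_left ?_ (Real.exp_pos _).le
  rw [Real.cosh_le_cosh, abs_of_nonneg (by linarith : (0:ℝ) ≤ 1 * t),
    abs_of_nonneg (by linarith : (0:ℝ) ≤ 2 * t)]
  linarith

/-- The recurrence z K₃ = z K₁ + 4 K₂, by integration by parts. -/
lemma kb_rec {z : ℝ} (hz : 0 < z) : z * Kb 3 z = z * Kb 1 z + 4 * Kb 2 z := by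
  set f : ℝ → ℝ := fun t => Real.exp (-z * Real.cosh t) * Real.sinh (2 * t) with hf
  set f' : ℝ → ℝ := fun t =>
    2 * (Real.exp (-z * Real.cosh t) * Real.cosh (2 * t)) -
      z / 2 * (Real.exp (-z * Real.cosh t) * Real.cosh (3 * t)) +
      z / 2 * (Real.exp (-z * Real.cosh t) * Real.cosh (1 * t)) with hf'
  have i1 := kb_integrableOn hz (zero_le_one)
  have i2 := kb_integrableOn hz (by norm_num : (0:ℝ) ≤ 2)
  have i3 := kb_integrableOn hz (by norm_num : (0:ℝ) ≤ 3)
  have hderiv : ∀ t ∈ Ioi (0 : ℝ), HasDerivAt f (f' t) t := by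
    intro t _
    have h1 : HasDerivAt (fun t : ℝ => -z * Real.cosh t) (-z * Real.sinh t) t :=
      (Real.hasDerivAt_cosh t).const_mul (-z)
    have h2 : HasDerivAt (fun t : ℝ => Real.exp (-z * Real.cosh t))
        (Real.exp (-z * Real.cosh t) * (-z * Real.sinh t)) t := h1.exp
    have hlin : HasDerivAt (fun x : ℝ => 2 * x) 2 t := by
      simpa using (hasDerivAt_id t).const_mul (2 : ℝ)
    have h3 : HasDerivAt (fun t : ℝ => Real.sinh (2 * t)) (Real.cosh (2 * t) * 2) t := by
      exact (Real.hasDerivAt_sinh (2 * t)).comp t hlin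
    have H := h2.mul h3
    have hid : Real.sinh (2 * t) * Real.sinh t = (Real.cosh (3 * t) - Real.cosh t) / 2 := by
      have a1 := Real.cosh_add (2 * t) t
      have a2 := Real.cosh_sub (2 * t) t
      rw [show 2 * t + t = 3 * t by ring] at a1
      rw [show 2 * t - t = t by ring] at a2
      linarith
    have heq : Real.exp (-z * Real.cosh t) * (-z * Real.sinh t) * Real.sinh (2 * t) +
        Real.exp (-z * Real.cosh t) * (Real.cosh (2 * t) * 2) = f' t := by
      rw [hf']
      simp only [one_mul]
      linear_combination (-(z * Real.exp (-z * Real.cosh t))) * hid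
    exact heq ▸ H
  have hcont : ContinuousWithinAt f (Ici (0 : ℝ)) 0 :=
    (Continuous.mul (by continuity) (by continuity)).continuousWithinAt
  have hf'int : IntegrableOn f' (Ioi (0 : ℝ)) :=
    ((i2.const_mul 2).sub (i3.const_mul (z / 2))).add (i1.const_mul (z / 2))
  have htends : Tendsto f atTop (nhds 0) := by
    apply squeeze_zero' (g := fun t =>
      Real.exp (((2:ℝ) + 1) ^ 2 / z) * Real.exp (-(1:ℝ) * t))
    · filter_upwards [eventually_ge_atTop (0 : ℝ)] with t ht
      exact mul_nonneg (Real.exp_pos _).le (Real.sinh_nonneg_iff.mpr (by linarith : (0:ℝ) ≤ 2 * t))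
    · filter_upwards [eventually_ge_atTop (0 : ℝ)] with t ht
      have hsc : Real.sinh (2 * t) ≤ Real.cosh (2 * t) := by
        nlinarith [Real.cosh_sq (2 * t), Real.cosh_pos (2 * t),
          Real.sinh_nonneg_iff.mpr (by linarith : (0:ℝ) ≤ 2 * t)]
      calc f t ≤ Real.exp (-z * Real.cosh t) * Real.cosh (2 * t) :=
            mul_le_mul_of_nonneg_left hsc (Real.exp_pos _).le
        _ ≤ _ := kb_integrand_le hz (by norm_num) ht
    · have : Tendsto (fun t : ℝ => Real.exp (-(1:ℝ) * t)) atTop (nhds 0) := by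
        simpa using Real.tendsto_exp_neg_atTop_nhds_zero
      simpa using this.const_mul (Real.exp (((2:ℝ) + 1) ^ 2 / z))
  have hI := MeasureTheory.integral_Ioi_of_hasDerivAt_of_tendsto hcont hderiv hf'int htends
  have hf0 : f 0 = 0 := by simp [hf]
  rw [hf0, sub_zero] at hI
  have hsub : Integrable (fun t : ℝ => 2 * (Real.exp (-z * Real.cosh t) * Real.cosh (2 * t)) -
      z / 2 * (Real.exp (-z * Real.cosh t) * Real.cosh (3 * t)))
      (volume.restrict (Set.Ioi 0)) := (i2.const_mul 2).sub (i3.const_mul (z / 2))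
  have hI' : ∫ t in Ioi (0:ℝ), (2 * (Real.exp (-z * Real.cosh t) * Real.cosh (2 * t)) -
      z / 2 * (Real.exp (-z * Real.cosh t) * Real.cosh (3 * t)) +
      z / 2 * (Real.exp (-z * Real.cosh t) * Real.cosh (1 * t))) = 0 := hI
  rw [MeasureTheory.integral_add hsub (i1.const_mul (z / 2)),
    MeasureTheory.integral_sub (i2.const_mul 2) (i3.const_mul (z / 2)),
    MeasureTheory.integral_const_mul, MeasureTheory.integral_const_mul,
    MeasureTheory.integral_const_mul] at hI'
  have hI2 : 2 * Kb 2 z - z / 2 * Kb 3 z + z / 2 * Kb 1 z = 0 := hI'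
  clear hI
  have hI := hI2
  linarith

end Aux

/-- The ultrarelativistic limit: ĉ(z)/c → 1/√3 as z → 0⁺; equivalently,
(za₂(z) − a₁(z))/(z²a₃(z)) → 1/2 as z → 0⁺. -/
theorem sound_speed_ultrarelativistic_limit (c : ℝ) (hc : 0 < c) :
    Tendsto (fun z : ℝ => cHat c z / c) (nhdsWithin 0 (Set.Ioi 0))
      (nhds (1 / Real.sqrt 3)) ∧
    Tendsto (fun z : ℝ => (z * aTwo z - aOne z) / (z ^ 2 * aThree z))
      (nhdsWithin 0 (Set.Ioi 0)) (nhds (1 / 2)) := by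
  set w : ℝ → ℝ := fun z => z * (Kb 1 z / Kb 2 z) with hw_def
  -- basic facts
  have hw_bound : ∀ z ∈ Set.Ioi (0:ℝ), 0 ≤ w z ∧ w z ≤ z := by
    intro z hz
    have h1 := kb_pos hz zero_le_one
    have h2 := kb_pos hz (by norm_num : (0:ℝ) ≤ 2)
    have hle := kb_one_le_two hz
    constructor
    · exact mul_nonneg (le_of_lt hz) (div_nonneg h1.le h2.le)
    · have : Kb 1 z / Kb 2 z ≤ 1 := (div_le_one h2).mpr hle
      calc w z ≤ z * 1 := mul_le_mul_of_nonneg_left this (le_of_lt hz)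
        _ = z := mul_one z
  have hzid : Tendsto (fun z : ℝ => z) (nhdsWithin 0 (Set.Ioi 0)) (nhds 0) :=
    Filter.tendsto_id.mono_left nhdsWithin_le_nhds
  have hw : Tendsto w (nhdsWithin 0 (Set.Ioi 0)) (nhds 0) := by
    apply squeeze_zero' ?_ ?_ hzid
    · filter_upwards [self_mem_nhdsWithin] with z hz using (hw_bound z hz).1
    · filter_upwards [self_mem_nhdsWithin] with z hz using (hw_bound z hz).2
  have hs : ∀ z ∈ Set.Ioi (0:ℝ), z * aOne z = 4 + w z := by
    intro z hz
    have h2 := kb_pos hz (by norm_num : (0:ℝ) ≤ 2)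
    have hrec := kb_rec hz
    rw [hw_def]
    unfold aOne
    field_simp
    linarith
  -- the rational expression in terms of s = z * aOne z
  have hratio : ∀ z ∈ Set.Ioi (0:ℝ),
      (z * aTwo z - aOne z) / (z ^ 2 * aThree z) =
      (-(4 + w z) ^ 2 + 5 * (4 + w z) + z ^ 2) /
        (-(4 + w z) ^ 3 + 6 * (4 + w z) ^ 2 - 6 * (4 + w z) + z ^ 2 * (4 + w z) - z ^ 2) := by
    intro z hz
    have hzne : z ≠ 0 := ne_of_gt hz
    rw [← mul_div_mul_left (z * aTwo z - aOne z) (z ^ 2 * aThree z) hzne]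
    rw [← hs z hz]
    congr 1
    · unfold aTwo; field_simp; ring
    · unfold aThree; field_simp
  -- limit of the rational expression
  have hW : Tendsto (fun z => 4 + w z) (nhdsWithin 0 (Set.Ioi 0)) (nhds 4) := by
    simpa using (tendsto_const_nhds (x := (4:ℝ))).add hw
  have hnum : Tendsto (fun z => -(4 + w z) ^ 2 + 5 * (4 + w z) + z ^ 2)
      (nhdsWithin 0 (Set.Ioi 0)) (nhds 4) := by
    have := ((hW.pow 2).neg.add (hW.const_mul 5)).add (hzid.pow 2)
    norm_num at this
    exact this
  have hden : Tendsto (fun z =>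
      -(4 + w z) ^ 3 + 6 * (4 + w z) ^ 2 - 6 * (4 + w z) + z ^ 2 * (4 + w z) - z ^ 2)
      (nhdsWithin 0 (Set.Ioi 0)) (nhds 8) := by
    have := ((((hW.pow 3).neg.add ((hW.pow 2).const_mul 6)).sub (hW.const_mul 6)).add
      ((hzid.pow 2).mul hW)).sub (hzid.pow 2)
    norm_num at this
    exact this
  have key : Tendsto (fun z =>
      (-(4 + w z) ^ 2 + 5 * (4 + w z) + z ^ 2) /
        (-(4 + w z) ^ 3 + 6 * (4 + w z) ^ 2 - 6 * (4 + w z) + z ^ 2 * (4 + w z) - z ^ 2))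
      (nhdsWithin 0 (Set.Ioi 0)) (nhds (1/2)) := by
    have := hnum.div hden (by norm_num)
    norm_num at this
    exact this
  have hg2 : Tendsto (fun z : ℝ => (z * aTwo z - aOne z) / (z ^ 2 * aThree z))
      (nhdsWithin 0 (Set.Ioi 0)) (nhds (1/2)) := by
    refine key.congr' ?_
    filter_upwards [self_mem_nhdsWithin] with z hz
    exact (hratio z hz).symm
  refine ⟨?_, hg2⟩
  -- first part
  set g : ℝ → ℝ := fun z => (z * aTwo z - aOne z) / (z ^ 2 * aThree z) with hg_def
  have hgpos : ∀ᶠ z in nhdsWithin 0 (Set.Ioi 0), (0:ℝ) < g z :=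
    hg2.eventually (eventually_gt_nhds (by norm_num))
  have heq : (fun z : ℝ => Real.sqrt (g z) / Real.sqrt (1 + g z)) =ᶠ[nhdsWithin 0 (Set.Ioi 0)]
      (fun z : ℝ => cHat c z / c) := by
    filter_upwards [hgpos, self_mem_nhdsWithin] with z h1 _
    have hcinf : cInf c z = c * Real.sqrt (g z) := by
      unfold cInf
      rw [show (c ^ 2 / z) * (z * aTwo z - aOne z) / (z * aThree z) = c ^ 2 * g z by
        rw [hg_def]; ring]
      rw [Real.sqrt_mul (sq_nonneg c), Real.sqrt_sq hc.le]
    have hsq1 : 0 < Real.sqrt (1 + g z) := Real.sqrt_pos.mpr (by linarith)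
    have hsum : c ^ 2 + cInf c z ^ 2 = c ^ 2 * (1 + g z) := by
      rw [hcinf, mul_pow, Real.sq_sqrt h1.le]; ring
    unfold cHat
    rw [hsum, Real.sqrt_mul (sq_nonneg c), Real.sqrt_sq hc.le, hcinf]
    field_simp
  have hnum' : Tendsto (fun z => Real.sqrt (g z)) (nhdsWithin 0 (Set.Ioi 0))
      (nhds (Real.sqrt (1/2))) := (Real.continuous_sqrt.tendsto _).comp hg2
  have hden' : Tendsto (fun z => Real.sqrt (1 + g z)) (nhdsWithin 0 (Set.Ioi 0))
      (nhds (Real.sqrt (3/2))) := by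
    have h1 : Tendsto (fun z => 1 + g z) (nhdsWithin 0 (Set.Ioi 0)) (nhds (3/2)) := by
      have := (tendsto_const_nhds (x := (1:ℝ))).add hg2
      norm_num at this
      exact this
    exact (Real.continuous_sqrt.tendsto _).comp h1
  have hval : Real.sqrt (1/2) / Real.sqrt (3/2) = 1 / Real.sqrt 3 := by
    rw [← Real.sqrt_div (by norm_num : (0:ℝ) ≤ 1/2),
      show (1:ℝ)/2/(3/2) = (3:ℝ)⁻¹ by norm_num, Real.sqrt_inv, one_div]
  have := (hnum'.div hden' (by positivity)).congr' heq
  rwa [hval] at this
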